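/- Let V be a (2n+1)-dimensional real inner product space carrying an almost contact metric structure (φ, ξ, η, g), and let D = ker η. Suppose B : D → D is a skew-symmetric automorphism with Bφ + φB = 0 on D. Then n is even, i.e. dim V ≡ 1 (mod 4). -/

import Mathlib

open scoped RealInnerProductSpace

private lemma aux_mul (z : ℂ) (P Q : ℝ) :
    ((z.re * P + z.im * Q : ℝ) : ℂ) - Complex.I * ((z.re * Q + z.im * -P : ℝ) : ℂ)
      = z * ((P : ℂ) - Complex.I * (Q : ℂ)) := by
  apply Complex.ext <;>
    simp [Complex.mul_re, Complex.mul_im, Complex.sub_re, Complex.sub_im] <;> ring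

set_option maxHeartbeats 2000000 in
theorem stmt11 {V : Type*} [NormedAddCommGroup V] [InnerProductSpace ℝ V]
    [FiniteDimensional ℝ V] (n : ℕ)
    (hdim : Module.finrank ℝ V = 2 * n + 1)
    (φ : V →ₗ[ℝ] V) (ξ : V) (η : V →ₗ[ℝ] ℝ)
    (hφ2 : ∀ X, φ (φ X) = -X + η X • ξ)
    (hηξ : η ξ = 1)
    (hgφ : ∀ X Y : V, ⟪φ X, φ Y⟫ = ⟪X, Y⟫ - η X * η Y)
    (B : V →ₗ[ℝ] V)
    (hBD : ∀ x ∈ LinearMap.ker η, B x ∈ LinearMap.ker η)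
    (hBskew : ∀ x ∈ LinearMap.ker η, ∀ y ∈ LinearMap.ker η, ⟪B x, y⟫ = -⟪x, B y⟫)
    (hBφ : ∀ x ∈ LinearMap.ker η, B (φ x) = -φ (B x))
    (hBinj : ∀ x ∈ LinearMap.ker η, B x = 0 → x = 0)
    (hBsurj : ∀ y ∈ LinearMap.ker η, ∃ x ∈ LinearMap.ker η, B x = y) :
    Even n := by
  classical
  set D := LinearMap.ker η with hD
  have hξne : ξ ≠ 0 := by
    intro h; rw [h, map_zero] at hηξ; exact one_ne_zero hηξ.symm
  -- key identity: η (φ X) • ξ = η X • φ ξ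
  have key : ∀ X, η (φ X) • ξ = η X • φ ξ := by
    intro X
    have h1 : φ (φ (φ X)) = -φ X + η (φ X) • ξ := hφ2 (φ X)
    have h2 : φ (φ (φ X)) = -φ X + η X • φ ξ := by
      rw [show φ (φ X) = -X + η X • ξ from hφ2 X, map_add, map_neg, map_smul]
    rw [h1] at h2
    exact add_left_cancel h2
  have hφξ : φ ξ = 0 := by
    have h1 : η (φ ξ) • ξ = φ ξ := by
      have := key ξ; rwa [hηξ, one_smul] at this
    have h0 : φ (φ ξ) = 0 := by
      rw [hφ2 ξ, hηξ, one_smul]; abel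
    have h2 : η (φ ξ) • φ ξ = 0 := by
      calc η (φ ξ) • φ ξ = φ (η (φ ξ) • ξ) := (map_smul φ _ _).symm
        _ = φ (φ ξ) := by rw [h1]
        _ = 0 := h0
    rcases smul_eq_zero.mp h2 with h | h
    · rw [← h1, h, zero_smul]
    · exact h
  have hηφ : ∀ X, η (φ X) = 0 := by
    intro X
    have := key X
    rw [hφξ, smul_zero] at this
    exact (smul_eq_zero.mp this).resolve_right hξne
  -- φ maps into D
  have hφD : ∀ x ∈ D, φ x ∈ D := fun x _ => hηφ x
  -- φ² = -1 on D
  have hφφ : ∀ x : V, η x = 0 → φ (φ x) = -x := by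
    intro x hx; rw [hφ2 x, hx, zero_smul, add_zero]
  -- skewness of φ against D
  have hφskew : ∀ x y : V, η y = 0 → ⟪φ x, y⟫ = -⟪x, φ y⟫ := by
    intro x y hy
    have h := hgφ x (φ y)
    rw [hηφ y, mul_zero, sub_zero, hφ2 y, hy, zero_smul, add_zero, inner_neg_right] at h
    linarith
  -- isometry of φ on D
  have hφiso : ∀ x y : V, η x = 0 → ⟪φ x, φ y⟫ = ⟪x, y⟫ := by
    intro x y hx; rw [hgφ, hx, zero_mul, sub_zero]
  -- linear maps on D
  let J : D →ₗ[ℝ] D := φ.restrict hφD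
  let B' : D →ₗ[ℝ] D := B.restrict hBD
  have hJcoe : ∀ x : D, ((J x : V)) = φ (x : V) := fun _ => rfl
  have hBcoe : ∀ x : D, ((B' x : V)) = B (x : V) := fun _ => rfl
  have hmem : ∀ x : D, η (x : V) = 0 := fun x => x.2
  have hJJ : ∀ x : D, J (J x) = -x := by
    intro x
    apply Subtype.ext
    rw [Submodule.coe_neg]
    show φ (φ (x : V)) = -(x : V)
    exact hφφ _ (hmem x)
  -- complex module structure on D
  letI instM : Module ℂ D :=
    { smul := fun z x => z.re • x + z.im • J x
      one_smul := by intro x; show (1:ℂ).re • x + (1:ℂ).im • J x = x; simp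
      mul_smul := by
        intro z w x
        show (z*w).re • x + (z*w).im • J x
            = z.re • (w.re • x + w.im • J x) + z.im • J (w.re • x + w.im • J x)
        rw [map_add, map_smul, map_smul, hJJ, Complex.mul_re, Complex.mul_im]
        rw [smul_add, smul_add, sub_smul, add_smul, smul_smul, smul_smul, smul_smul,
          smul_smul, smul_neg]
        abel
      smul_zero := by
        intro z; show z.re • (0:D) + z.im • J 0 = 0; simp
      smul_add := by
        intro z x y
        show z.re • (x + y) + z.im • J (x + y) = (z.re • x + z.im • J x) + (z.re • y + z.im • J y)
        rw [map_add, smul_add, smul_add]; abel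
      add_smul := by
        intro z w x
        show (z+w).re • x + (z+w).im • J x = (z.re • x + z.im • J x) + (w.re • x + w.im • J x)
        rw [Complex.add_re, Complex.add_im, add_smul, add_smul]; abel
      zero_smul := by
        intro x; show (0:ℂ).re • x + (0:ℂ).im • J x = 0; simp }
  letI instT : IsScalarTower ℝ ℂ D := by
    constructor
    intro r z x
    show ((r • z).re) • x + ((r • z).im) • J x = r • (z.re • x + z.im • J x)
    rw [Complex.real_smul, Complex.mul_re, Complex.mul_im]
    simp [smul_add, smul_smul, mul_comm]
  haveI : FiniteDimensional ℂ D := FiniteDimensional.right ℝ ℂ D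
  -- dimension count
  have hrange : LinearMap.range η = ⊤ := by
    rw [LinearMap.range_eq_top]
    intro r
    exact ⟨r • ξ, by rw [map_smul, hηξ, smul_eq_mul, mul_one]⟩
  have hkerdim : Module.finrank ℝ D = 2 * n := by
    have h := LinearMap.finrank_range_add_finrank_ker η
    rw [hrange, finrank_top, Module.finrank_self, hdim, ← hD] at h
    omega
  have hCdim : Module.finrank ℂ D = n := by
    have h := Module.finrank_mul_finrank ℝ ℂ D
    rw [Complex.finrank_real_complex, hkerdim] at h
    omega
  -- the complex bilinear form
  have hBφ' : ∀ x : D, B (φ (x : V)) = -φ (B (x : V)) := fun x => hBφ _ (hmem x)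
  have hzsmul : ∀ (z : ℂ) (x : D), ((z • x : D) : V) = z.re • (x : V) + z.im • φ (x : V) :=
    fun z x => rfl
  let ω : D →ₗ[ℂ] D →ₗ[ℂ] ℂ := LinearMap.mk₂ ℂ
    (fun x y => (⟪B (x : V), (y : V)⟫ : ℂ) - Complex.I * (⟪B (x : V), φ (y : V)⟫ : ℂ))
    (by
      intro x x' y
      push_cast [Submodule.coe_add, map_add, inner_add_left]
      ring)
    (by
      intro z x y
      have e1 : B ((z • x : D) : V) = z.re • B (x:V) + z.im • -φ (B (x:V)) := by
        rw [hzsmul, map_add, map_smul, map_smul, hBφ' x]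
      rw [e1, inner_add_left, real_inner_smul_left, real_inner_smul_left, inner_neg_left,
        inner_add_left, real_inner_smul_left, real_inner_smul_left, inner_neg_left]
      rw [show ⟪φ (B (x:V)), (y:V)⟫ = -⟪B (x:V), φ (y:V)⟫ from hφskew _ _ (hmem y)]
      rw [show ⟪φ (B (x:V)), φ (y:V)⟫ = ⟪B (x:V), (y:V)⟫ from
        hφiso _ _ (hBD _ (hmem x))]
      rw [smul_eq_mul]
      apply Complex.ext <;>
        simp [Complex.mul_re, Complex.mul_im, Complex.sub_re, Complex.sub_im] <;> ring)
    (by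
      intro x y y'
      push_cast [Submodule.coe_add, map_add, inner_add_right]
      ring)
    (by
      intro z x y
      have e2 : φ ((z • y : D) : V) = z.re • φ (y:V) + z.im • -(y:V) := by
        rw [hzsmul, map_add, map_smul, map_smul, hφφ _ (hmem y)]
      rw [e2, hzsmul, inner_add_right, real_inner_smul_right, real_inner_smul_right,
        inner_add_right, real_inner_smul_right, real_inner_smul_right, inner_neg_right]
      rw [smul_eq_mul]
      exact aux_mul z _ _)
  have hωapp : ∀ x y : D, ω x y
      = (⟪B (x : V), (y : V)⟫ : ℂ) - Complex.I * (⟪B (x : V), φ (y : V)⟫ : ℂ) :=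
    fun x y => rfl
  clear_value ω
  clear_value instT
  clear_value instM
  -- ω is alternating
  have hωalt : ∀ x : D, ω x x = 0 := by
    intro x
    have h1 : ⟪B (x:V), (x:V)⟫ = 0 := by
      have := hBskew _ (hmem x) _ (hmem x)
      have h2 : ⟪(x:V), B (x:V)⟫ = ⟪B (x:V), (x:V)⟫ := real_inner_comm _ _
      rw [h2] at this; linarith
    have h2 : ⟪B (x:V), φ (x:V)⟫ = 0 := by
      have ha : ⟪B (x:V), φ (x:V)⟫ = -⟪(x:V), B (φ (x:V))⟫ := hBskew _ (hmem x) _ (hηφ _)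
      rw [hBφ' x, inner_neg_right, neg_neg] at ha
      have hcomm : ⟪(x:V), φ (B (x:V))⟫ = ⟪φ (B (x:V)), (x:V)⟫ := real_inner_comm _ _
      have hc : ⟪φ (B (x:V)), (x:V)⟫ = -⟪B (x:V), φ (x:V)⟫ := hφskew _ _ (hmem x)
      linarith
    rw [hωapp, h1, h2]
    norm_num
  have hωskew : ∀ x y : D, ω x y = -ω y x := by
    intro x y
    have h := hωalt (x + y)
    rw [map_add] at h
    simp only [map_add, LinearMap.add_apply] at h
    rw [hωalt x, hωalt y] at h
    linear_combination h
  -- ω is nondegenerate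
  have hωnd : ∀ x : D, (∀ y : D, ω x y = 0) → x = 0 := by
    intro x hx
    have hBx : B (x : V) ∈ D := hBD _ (hmem x)
    have h := hx ⟨B (x : V), hBx⟩
    rw [hωapp] at h
    have hre : ⟪B (x:V), B (x:V)⟫ = 0 := by
      have h' := congrArg Complex.re h
      simp only [Complex.sub_re, Complex.mul_re, Complex.ofReal_re, Complex.ofReal_im,
        Complex.I_re, Complex.I_im, zero_mul, one_mul, sub_zero] at h'
      exact h'
    have : B (x : V) = 0 := inner_self_eq_zero.mp hre
    have : (x : V) = 0 := hBinj _ (hmem x) this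
    exact Subtype.ext this
  -- matrix argument
  let b : Module.Basis (Fin n) ℂ D := Module.finBasisOfFinrankEq ℂ ↥D hCdim
  have hdet := (LinearMap.BilinForm.nondegenerate_iff_det_ne_zero b).mp
    ⟨hωnd, fun y hy => hωnd y (fun x => by rw [hωskew, hy, neg_zero])⟩
  by_contra hodd
  have hoddn : Odd n := Nat.not_even_iff_odd.mp hodd
  have hT : (LinearMap.BilinForm.toMatrix b ω).transpose = -(LinearMap.BilinForm.toMatrix b ω) := by
    ext i j
    rw [Matrix.transpose_apply, Matrix.neg_apply, LinearMap.BilinForm.toMatrix_apply,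
      LinearMap.BilinForm.toMatrix_apply]
    exact (hωskew (b j) (b i)) 
  have h1 : (LinearMap.BilinForm.toMatrix b ω).det
      = (-1 : ℂ) ^ n * (LinearMap.BilinForm.toMatrix b ω).det := by
    conv_lhs => rw [← Matrix.det_transpose, hT]
    rw [Matrix.det_neg, Fintype.card_fin]
  rw [hoddn.neg_one_pow, neg_one_mul] at h1
  have h2 : (2:ℂ) * (LinearMap.BilinForm.toMatrix b ω).det = 0 := by linear_combination h1
  exact hdet (by simpa using h2)
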